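/- Let v(t), u(t) solve the ODE system v' = -u - v², u' = v(1 - u) on an interval where the solution exists. Then the quantity (v² + 2u - 1)/(u - 1)² is constant along any solution with u(t) ≠ 1. -/

import Mathlib

/-- Along any solution of `v' = -u - v²`, `u' = v(1 - u)` with `u ≠ 1`,
the quantity `(v² + 2u - 1)/(u - 1)²` is constant. -/
theorem stmt_0 (J : Set ℝ) (hJ : Convex ℝ J) (v u : ℝ → ℝ)
    (hv : ∀ t ∈ J, HasDerivAt v (-u t - (v t) ^ 2) t)
    (hu : ∀ t ∈ J, HasDerivAt u (v t * (1 - u t)) t)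
    (hu1 : ∀ t ∈ J, u t ≠ 1) :
    ∀ s ∈ J, ∀ t ∈ J,
      ((v s) ^ 2 + 2 * u s - 1) / (u s - 1) ^ 2
        = ((v t) ^ 2 + 2 * u t - 1) / (u t - 1) ^ 2 := by
  set F : ℝ → ℝ := fun t => ((v t) ^ 2 + 2 * u t - 1) / (u t - 1) ^ 2 with hF
  have hderiv : ∀ t ∈ J, HasDerivAt F 0 t := by
    intro t ht
    have hne : u t - 1 ≠ 0 := sub_ne_zero.mpr (hu1 t ht)
    have hD2 : ((u t - 1) ^ 2 : ℝ) ≠ 0 := pow_ne_zero 2 hne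
    have hN : HasDerivAt (fun t => (v t) ^ 2 + 2 * u t - 1)
        (2 * v t ^ 1 * (-u t - (v t) ^ 2) + 2 * (v t * (1 - u t))) t :=
      (((hv t ht).pow 2).add ((hu t ht).const_mul 2)).sub_const 1
    have hD : HasDerivAt (fun t => (u t - 1) ^ 2)
        (2 * (u t - 1) ^ 1 * (v t * (1 - u t))) t :=
      ((hu t ht).sub_const 1).pow 2
    have h := hN.div hD hD2
    convert h using 1
    · rfl
    · rfl
    · rfl
    rw [eq_comm, div_eq_zero_iff]
    left
    ring
  intro s hs t ht
  have key := Convex.norm_image_sub_le_of_norm_hasDerivWithin_le (C := 0)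
    (f := F) (f' := fun _ => 0)
    (fun x hx => (hderiv x hx).hasDerivWithinAt)
    (fun x _ => by simp) hJ ht hs
  have : F s = F t := by
    have h0 : ‖F s - F t‖ ≤ 0 := by simpa using key
    have := le_antisymm h0 (norm_nonneg _)
    rwa [norm_eq_zero, sub_eq_zero] at this
  simpa [hF] using this
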